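/- For every ε > 0 and every α ∈ (0,1], the set {m ∈ ℤ⁺ : for all natural numbers k with ⌊α·log₂ m⌋ ≤ k ≤ ⌊log₂ m⌋, −ε·k < (Σ_{i=0}^{k−1} p(m)_i) − k/2 < ε·k} is *-dense. -/

import Mathlib

/-- The accelerated Collatz map `T(m) = m/2` if `m` even, `(3m+1)/2` if `m` odd. -/
def T (m : ℕ) : ℕ := if m % 2 = 0 then m / 2 else (3 * m + 1) / 2

/-- The parity sequence of `m`: `p(m)_k = T^[k] m mod 2`. -/
def parity (m k : ℕ) : ℕ := T^[k] m % 2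

open scoped Classical in
/-- Number of elements of `A` in `{1, …, n}`. -/
noncomputable def countIn (A : Set ℕ) (n : ℕ) : ℕ :=
  ((Finset.Icc 1 n).filter (fun m => m ∈ A)).card

/-- `S` has `(C,D)`-density: `#(S ∩ [1,N])/N ≥ 1 - C/N^D` for every positive `N`. -/
def hasCDdensity (S : Set ℕ) (C D : ℝ) : Prop :=
  ∀ N : ℕ, 0 < N → 1 - C / (N : ℝ) ^ D ≤ (countIn S N : ℝ) / N

/-- `S` has `D`-density: it has `(C,D)`-density for some `C > 0`. -/
def hasDdensity (S : Set ℕ) (D : ℝ) : Prop := ∃ C > 0, hasCDdensity S C D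

/-- `S` is `*`-dense: it has `D`-density for some `0 < D ≤ 1`. -/
def starDense (S : Set ℕ) : Prop := ∃ D, 0 < D ∧ D ≤ 1 ∧ hasDdensity S D

open Finset

def Spar (k m : ℕ) : ℕ := ∑ i ∈ Finset.range k, parity m i

lemma parity_zero (m : ℕ) : parity m 0 = m % 2 := rfl

lemma parity_succ (m i : ℕ) : parity m (i + 1) = parity (T m) i := by
  simp [parity, Function.iterate_succ_apply]

lemma Spar_succ (k m : ℕ) : Spar (k + 1) m = m % 2 + Spar k (T m) := by
  simp only [Spar, Finset.sum_range_succ', parity_succ, parity_zero]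
  exact add_comm _ _

lemma two_mul_T_even {m : ℕ} (h : m % 2 = 0) : 2 * T m = m := by
  rw [T, if_pos h]; omega

lemma two_mul_T_odd {m : ℕ} (h : m % 2 = 1) : 2 * T m = 3 * m + 1 := by
  rw [T, if_neg (by omega)]; omega

lemma step_mod {j m m' : ℕ} (h : ((2:ℤ)^(j+1)) ∣ (m':ℤ) - m) :
    m % 2 = m' % 2 ∧ ((2:ℤ)^j) ∣ (T m' : ℤ) - T m := by
  obtain ⟨c, hc⟩ := h
  have hpar : m % 2 = m' % 2 := by
    have h2 : (m':ℤ) - m = 2 * (2^j * c) := by rw [hc]; ring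
    omega
  refine ⟨hpar, ?_⟩
  rcases Nat.mod_two_eq_zero_or_one m with hm | hm
  · have e1 : (2:ℤ) * T m = m := by exact_mod_cast two_mul_T_even hm
    have e2 : (2:ℤ) * T m' = m' := by exact_mod_cast two_mul_T_even (hpar ▸ hm)
    refine ⟨c, mul_left_cancel₀ (two_ne_zero) ?_⟩
    linear_combination e2 - e1 + hc
  · have e1 : (2:ℤ) * T m = 3 * m + 1 := by exact_mod_cast two_mul_T_odd hm
    have e2 : (2:ℤ) * T m' = 3 * m' + 1 := by exact_mod_cast two_mul_T_odd (hpar ▸ hm)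
    refine ⟨3 * c, mul_left_cancel₀ (two_ne_zero) ?_⟩
    linear_combination e2 - e1 + 3 * hc

lemma parity_congr : ∀ (k : ℕ) {m m' : ℕ}, ((2:ℤ)^k) ∣ (m':ℤ) - m →
    ∀ i < k, parity m i = parity m' i := by
  intro k
  induction k with
  | zero => intro m m' _ i hi; omega
  | succ k ih =>
    intro m m' h i hi
    obtain ⟨hpar, hT⟩ := step_mod h
    cases i with
    | zero => simpa [parity_zero] using hpar
    | succ i =>
      rw [parity_succ, parity_succ]
      exact ih hT i (by omega)

lemma Spar_congr (k : ℕ) {m m' : ℕ} (h : ((2:ℤ)^k) ∣ (m':ℤ) - m) :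
    Spar k m = Spar k m' :=
  Finset.sum_congr rfl fun i hi => parity_congr k h i (Finset.mem_range.mp hi)

lemma Spar_mod (k m : ℕ) : Spar k (m % 2^k) = Spar k m := by
  refine Spar_congr k ⟨(m / 2^k : ℕ), ?_⟩
  have h2 : ((2^k * (m / 2^k) + m % 2^k : ℕ) : ℤ) = (m : ℤ) := by
    exact_mod_cast congrArg (Nat.cast : ℕ → ℤ) (Nat.div_add_mod m (2^k))
  rw [Nat.cast_add, Nat.cast_mul, Nat.cast_pow] at h2
  push_cast at h2 ⊢
  linarith

lemma sum_range_double (n : ℕ) (f : ℕ → ℝ) :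
    ∑ i ∈ range (2*n), f i = ∑ j ∈ range n, (f (2*j) + f (2*j+1)) := by
  induction n with
  | zero => simp
  | succ n ih =>
    rw [show 2*(n+1) = (2*n)+1+1 by ring, sum_range_succ, sum_range_succ, ih,
      sum_range_succ]
    ring

lemma sum_range_comp_of_inj (n : ℕ) (e : ℕ → ℕ) (g : ℕ → ℝ)
    (hmaps : ∀ s < n, e s < n) (hinj : ∀ a < n, ∀ b < n, e a = e b → a = b) :
    ∑ s ∈ range n, g (e s) = ∑ r ∈ range n, g r := by
  refine Finset.sum_bij (fun s _ => e s) ?_ ?_ ?_ ?_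
  · intro a ha; exact mem_range.mpr (hmaps a (mem_range.mp ha))
  · intro a ha b hb hab; exact hinj a (mem_range.mp ha) b (mem_range.mp hb) hab
  · intro b hb
    obtain ⟨a, ha, hab⟩ := Finset.surj_on_of_inj_on_of_card_le
      (fun s (_ : s ∈ range n) => e s)
      (fun a ha => mem_range.mpr (hmaps a (mem_range.mp ha)))
      (fun a b ha hb hab => hinj a (mem_range.mp ha) b (mem_range.mp hb) hab)
      le_rfl b hb
    exact ⟨a, ha, hab.symm⟩
  · intro a ha; rfl

lemma T_two_mul (s : ℕ) : T (2*s) = s := by rw [T, if_pos (by omega)]; omega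
lemma T_two_mul_add_one (s : ℕ) : T (2*s+1) = 3*s+2 := by rw [T, if_neg (by omega)]; omega

lemma mgf (t : ℝ) : ∀ k : ℕ, ∑ r ∈ range (2^k), t ^ Spar k r = (1+t)^k := by
  intro k
  induction k with
  | zero => simp [Spar]
  | succ k ih =>
    rw [show (2:ℕ)^(k+1) = 2*2^k by ring, sum_range_double]
    have h1 : ∀ s : ℕ, t ^ Spar (k+1) (2*s) = t ^ Spar k s := by
      intro s; rw [Spar_succ, T_two_mul, Nat.mul_mod_right, zero_add]
    have h2 : ∀ s : ℕ, t ^ Spar (k+1) (2*s+1) = t * t ^ Spar k (3*s+2) := by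
      intro s
      rw [Spar_succ, T_two_mul_add_one, show (2*s+1) % 2 = 1 by omega, pow_add, pow_one]
    have h3 : ∑ s ∈ range (2^k), t ^ Spar k (3*s+2) = ∑ r ∈ range (2^k), t ^ Spar k r := by
      have h4 : ∀ s : ℕ, t ^ Spar k (3*s+2) = t ^ Spar k ((3*s+2) % 2^k) := by
        intro s; rw [Spar_mod]
      simp_rw [h4]
      refine sum_range_comp_of_inj (2^k) (fun s => (3*s+2) % 2^k)
        (fun r => t ^ Spar k r)
        (fun s _ => Nat.mod_lt _ (Nat.pow_pos (by norm_num))) ?_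
      intro a ha b hb hab
      have hco : Nat.Coprime (2^k) 3 := Nat.Coprime.pow_left k (by norm_num)
      have h5 : 3*a ≡ 3*b [MOD 2^k] :=
        Nat.ModEq.add_right_cancel' 2 (hab : 3*a+2 ≡ 3*b+2 [MOD 2^k])
      have h6 : a ≡ b [MOD 2^k] := (Nat.ModEq.cancel_left_of_coprime hco) h5
      have h7 : a % 2^k = b % 2^k := h6
      rwa [Nat.mod_eq_of_lt ha, Nat.mod_eq_of_lt hb] at h7
    simp_rw [h1, h2]
    rw [Finset.sum_add_distrib, ← Finset.mul_sum, h3, ih]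
    ring

open scoped Classical

lemma card_filter_mul_le {k : ℕ} {t a : ℝ} (ht : 0 < t) (P : ℕ → Prop)
    (hP : ∀ r, P r → t ^ a ≤ t ^ (Spar k r)) :
    (((range (2^k)).filter P).card : ℝ) * t ^ a ≤ (1+t)^k := by
  have h1 : (((range (2^k)).filter P).card : ℝ) * t ^ a
      = ∑ _r ∈ (range (2^k)).filter P, t ^ a := by
    rw [Finset.sum_const, nsmul_eq_mul]
  rw [h1]
  calc ∑ r ∈ (range (2^k)).filter P, t ^ a
      ≤ ∑ r ∈ (range (2^k)).filter P, t ^ Spar k r :=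
        Finset.sum_le_sum (fun r hr => hP r (Finset.mem_filter.mp hr).2)
    _ ≤ ∑ r ∈ range (2^k), t ^ Spar k r :=
        Finset.sum_le_sum_of_subset_of_nonneg (Finset.filter_subset _ _)
          (fun r _ _ => pow_nonneg ht.le _)
    _ = (1+t)^k := mgf t k

section Eps
variable {ε : ℝ} (hε : 0 < ε) (hε2 : ε ≤ 1/2)

include hε hε2 in
lemma key_ineq : 2 + ε ≤ 2 * Real.exp (-(ε^2/3)) * (1+ε) ^ ((1/2 + ε) : ℝ) := by
  have h1ε : (0:ℝ) < 1 + ε := by linarith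
  have h1 : (1+ε) ^ ((1/2+ε):ℝ) = Real.exp ((1/2+ε) * Real.log (1+ε)) := by
    rw [Real.rpow_def_of_pos h1ε, mul_comm]
  have hlog : ε / (1+ε) ≤ Real.log (1+ε) := by
    have h2 := Real.one_sub_inv_le_log_of_pos h1ε
    have h3 : 1 - (1+ε)⁻¹ = ε/(1+ε) := by field_simp; ring
    linarith [h3 ▸ h2]
  have hfrac : ε/2 + ε^2/3 ≤ (1/2+ε)*(ε/(1+ε)) := by
    rw [← mul_div_assoc, le_div_iff₀ h1ε]
    nlinarith
  have hmono : ε/2 ≤ -(ε^2/3) + (1/2+ε) * Real.log (1+ε) := by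
    have h4 := mul_le_mul_of_nonneg_left hlog (show (0:ℝ) ≤ 1/2+ε by linarith)
    linarith
  calc 2 + ε ≤ 2 * Real.exp (ε/2) := by nlinarith [Real.add_one_le_exp (ε/2)]
    _ ≤ 2 * Real.exp (-(ε^2/3) + (1/2+ε) * Real.log (1+ε)) := by
        have := Real.exp_le_exp.mpr hmono
        linarith
    _ = 2 * Real.exp (-(ε^2/3)) * (1+ε) ^ ((1/2+ε):ℝ) := by
        rw [h1, Real.exp_add]
        ring

include hε hε2 in
lemma tail_finish (k c : ℕ)
    (h : (c:ℝ) * (1+ε) ^ (((1/2+ε)) * k : ℝ) ≤ (2+ε)^k) :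
    (c:ℝ) ≤ (2 * Real.exp (-(ε^2/3)))^k := by
  have h1ε : (0:ℝ) < 1 + ε := by linarith
  have hX : (0:ℝ) < (1+ε) ^ (((1/2+ε)) * k : ℝ) := Real.rpow_pos_of_pos h1ε _
  have hk := pow_le_pow_left₀ (by linarith : (0:ℝ) ≤ 2 + ε) (key_ineq hε hε2) k
  have h2 : (2+ε)^k ≤ (2*Real.exp (-(ε^2/3)))^k * (1+ε) ^ ((1/2+ε) * k : ℝ) := by
    rw [mul_pow, mul_pow] at hk
    rw [← Real.rpow_natCast ((1+ε) ^ ((1/2+ε):ℝ)) k, ← Real.rpow_mul h1ε.le] at hk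
    calc (2+ε)^k ≤ 2^k * Real.exp (-(ε^2/3))^k * (1+ε)^((1/2+ε)*k : ℝ) := hk
      _ = (2*Real.exp (-(ε^2/3)))^k * (1+ε) ^ ((1/2+ε) * k : ℝ) := by rw [mul_pow]
  exact le_of_mul_le_mul_right (h.trans h2) hX

include hε hε2 in
lemma card_bad_le (k : ℕ) :
    (((range (2^k)).filter (fun r =>
      ¬(-(ε*k) < (Spar k r:ℝ) - k/2 ∧ (Spar k r:ℝ) - k/2 < ε*k))).card : ℝ)
    ≤ 2 * (2 * Real.exp (-(ε^2/3)))^k := by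
  have h1ε : (0:ℝ) < 1 + ε := by linarith
  set Pu : ℕ → Prop := fun r => (1/2+ε)*(k:ℝ) ≤ (Spar k r : ℝ) with hPu
  set Pd : ℕ → Prop := fun r => (Spar k r : ℝ) ≤ (1/2-ε)*(k:ℝ) with hPd
  have hsub : (range (2^k)).filter (fun r =>
      ¬(-(ε*k) < (Spar k r:ℝ) - k/2 ∧ (Spar k r:ℝ) - k/2 < ε*k))
      ⊆ ((range (2^k)).filter Pu) ∪ ((range (2^k)).filter Pd) := by
    intro r hr
    rw [Finset.mem_filter] at hr
    obtain ⟨hr1, hr2⟩ := hr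
    push_neg at hr2
    rw [Finset.mem_union, Finset.mem_filter, Finset.mem_filter]
    by_cases hcase : -(ε*k) < (Spar k r:ℝ) - k/2
    · exact Or.inl ⟨hr1, by have := hr2 hcase; simp only [hPu]; linarith⟩
    · exact Or.inr ⟨hr1, by simp only [hPd]; push_neg at hcase; linarith⟩
  have hu : (((range (2^k)).filter Pu).card : ℝ) ≤ (2 * Real.exp (-(ε^2/3)))^k := by
    refine tail_finish hε hε2 k _ ?_
    have := card_filter_mul_le (k := k) (t := 1+ε) (a := (1/2+ε)*(k:ℝ)) h1ε Pu ?_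
    · calc (((range (2^k)).filter Pu).card : ℝ) * (1+ε) ^ ((1/2+ε)*(k:ℝ)) ≤ (1+(1+ε))^k := this
        _ = (2+ε)^k := by ring_nf
    · intro r hr
      rw [← Real.rpow_natCast (1+ε) (Spar k r)]
      exact Real.rpow_le_rpow_of_exponent_le (by linarith) hr
  have hd : (((range (2^k)).filter Pd).card : ℝ) ≤ (2 * Real.exp (-(ε^2/3)))^k := by
    refine tail_finish hε hε2 k _ ?_
    have hinv : (0:ℝ) < (1+ε)⁻¹ := by positivity
    have h5 := card_filter_mul_le (k := k) (t := (1+ε)⁻¹) (a := (1/2-ε)*(k:ℝ)) hinv Pd ?_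
    · -- multiply by (1+ε)^k
      have hpk : (0:ℝ) < (1+ε)^k := by positivity
      have h6 := mul_le_mul_of_nonneg_right h5 hpk.le
      have h7 : (1+(1+ε)⁻¹)^k * (1+ε)^k = (2+ε)^k := by
        rw [← mul_pow]; congr 1; field_simp; ring
      have h8 : (1+ε)⁻¹ ^ ((1/2-ε)*(k:ℝ)) * (1+ε)^k = (1+ε) ^ ((1/2+ε)*(k:ℝ)) := by
        rw [Real.inv_rpow h1ε.le, ← Real.rpow_neg h1ε.le,
          ← Real.rpow_natCast (1+ε) k, ← Real.rpow_add h1ε]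
        congr 1
        ring
      calc (((range (2^k)).filter Pd).card : ℝ) * (1+ε) ^ ((1/2+ε)*(k:ℝ))
          = (((range (2^k)).filter Pd).card : ℝ) * ((1+ε)⁻¹ ^ ((1/2-ε)*(k:ℝ)) * (1+ε)^k) := by
            rw [h8]
        _ = (((range (2^k)).filter Pd).card : ℝ) * (1+ε)⁻¹ ^ ((1/2-ε)*(k:ℝ)) * (1+ε)^k := by
            ring
        _ ≤ (1+(1+ε)⁻¹)^k * (1+ε)^k := h6
        _ = (2+ε)^k := h7
    · intro r hr
      rw [← Real.rpow_natCast ((1+ε)⁻¹) (Spar k r)]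
      have h9 : (1+ε)⁻¹ ≤ 1 := by
        have h10 : (1+ε)⁻¹ * (1+ε) = 1 := inv_mul_cancel₀ (ne_of_gt h1ε)
        nlinarith
      exact Real.rpow_le_rpow_of_exponent_ge hinv h9 hr
  calc (((range (2^k)).filter (fun r =>
      ¬(-(ε*k) < (Spar k r:ℝ) - k/2 ∧ (Spar k r:ℝ) - k/2 < ε*k))).card : ℝ)
      ≤ ((((range (2^k)).filter Pu) ∪ ((range (2^k)).filter Pd)).card : ℝ) := by
        exact_mod_cast Finset.card_le_card hsub
    _ ≤ ((((range (2^k)).filter Pu).card + (((range (2^k)).filter Pd)).card : ℕ) : ℝ) := by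
        exact_mod_cast Finset.card_union_le _ _
    _ ≤ 2 * (2 * Real.exp (-(ε^2/3)))^k := by push_cast; linarith

end Eps

lemma card_fiber_le (N n r : ℕ) : ((Finset.Icc 1 N).filter (fun m => m % n = r)).card ≤ N / n + 1 := by
  have h0 := Finset.card_range (N/n + 1)
  rw [← h0]
  apply Finset.card_le_card_of_injOn (fun m => m / n)
  · intro m hm
    simp only [Finset.coe_filter, Set.mem_setOf_eq, Finset.mem_Icc] at hm
    exact Finset.mem_range.mpr (by show m / n < N / n + 1; have := Nat.div_le_div_right (c := n) hm.1.2; omega)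
  · intro a ha b hb hab
    simp only [Finset.coe_filter, Set.mem_setOf_eq, Finset.mem_Icc] at ha hb
    calc a = n * (a / n) + a % n := (Nat.div_add_mod a n).symm
      _ = n * (b / n) + b % n := by
          simp only [] at hab
          rw [hab, ha.2, hb.2]
      _ = b := Nat.div_add_mod b n

lemma card_residue_le (N n : ℕ) (hn : 0 < n) (Q : ℕ → Prop) [DecidablePred Q] :
    ((Finset.Icc 1 N).filter (fun m => Q (m % n))).card
      ≤ (N/n + 1) * ((range n).filter Q).card := by
  classical
  apply Finset.card_le_mul_card_image_of_maps_to (f := fun m => m % n)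
  · intro m hm
    rw [Finset.mem_filter] at hm
    exact Finset.mem_filter.mpr ⟨Finset.mem_range.mpr (Nat.mod_lt _ hn), hm.2⟩
  · intro b _
    calc (((Finset.Icc 1 N).filter (fun m => Q (m % n))).filter (fun m => m % n = b)).card
        ≤ ((Finset.Icc 1 N).filter (fun m => m % n = b)).card := by
          apply Finset.card_le_card
          intro m hm
          rw [Finset.mem_filter, Finset.mem_filter] at hm
          exact Finset.mem_filter.mpr ⟨hm.1.1, hm.2⟩
      _ ≤ N / n + 1 := card_fiber_le N n b

lemma sum_Icc_pow_le {x : ℝ} (hx0 : 0 ≤ x) (hx1 : x < 1) (a b : ℕ) :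
    ∑ k ∈ Finset.Icc a b, x^k ≤ x^a / (1-x) := by
  have h1x : (0:ℝ) < 1 - x := by linarith
  rw [← Finset.Ico_add_one_right_eq_Icc, Finset.sum_Ico_eq_sum_range]
  have h2 : ∀ i ∈ range (b+1-a), x^(a+i) = x^a * x^i := fun i _ => pow_add x a i
  rw [Finset.sum_congr rfl h2, ← Finset.mul_sum]
  have h3 : ∑ i ∈ range (b+1-a), x^i ≤ 1/(1-x) := by
    have h4 := geom_sum_mul x (b+1-a)
    have h5 : (0:ℝ) ≤ x^(b+1-a) := pow_nonneg hx0 _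
    rw [le_div_iff₀ h1x]
    nlinarith
  calc x^a * ∑ i ∈ range (b+1-a), x^i ≤ x^a * (1/(1-x)) :=
      mul_le_mul_of_nonneg_left h3 (pow_nonneg hx0 _)
    _ = x^a/(1-x) := by ring

lemma Spar_cast (k m : ℕ) : ((Spar k m : ℕ) : ℝ) = ∑ i ∈ Finset.range k, (parity m i : ℝ) := by
  unfold Spar; push_cast; rfl

/-- The good set. -/
def GoodSet (ε α : ℝ) : Set ℕ := {m : ℕ |
      ∀ k : ℕ, ⌊α * Real.logb 2 m⌋₊ ≤ k → k ≤ ⌊Real.logb 2 m⌋₊ →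
        -(ε * k) < (∑ i ∈ Finset.range k, (parity m i : ℝ)) - k / 2 ∧
        (∑ i ∈ Finset.range k, (parity m i : ℝ)) - k / 2 < ε * k}

lemma two_pow_le_of_le_floor {N k : ℕ} (hN : 1 ≤ N) (h : k ≤ ⌊Real.logb 2 N⌋₊) :
    ((2:ℝ))^k ≤ N := by
  have hN1 : (1:ℝ) ≤ (N:ℝ) := by exact_mod_cast hN
  have hlogN : 0 ≤ Real.logb 2 N := Real.logb_nonneg one_lt_two hN1
  have h1 : (k:ℝ) ≤ Real.logb 2 N :=
    le_trans (by exact_mod_cast Nat.cast_le.mpr h) (Nat.floor_le hlogN)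
  calc (2:ℝ)^k = (2:ℝ)^(k:ℝ) := (Real.rpow_natCast 2 k).symm
    _ ≤ (2:ℝ)^(Real.logb 2 N) := Real.rpow_le_rpow_of_exponent_le one_le_two h1
    _ = N := Real.rpow_logb two_pos (by norm_num) (by linarith)

lemma bad_card_bound {ε α : ℝ} (hε : 0 < ε) (hε2 : ε ≤ 1/2) (hα0 : 0 < α) (hα1 : α ≤ 1)
    (N : ℕ) (hN : 0 < N) :
    (((Finset.Icc 1 N).filter (fun m => m ∉ GoodSet ε α)).card : ℝ)
      ≤ (N:ℝ)^((1:ℝ)/2) + (4 * Real.exp (ε^2/3) / (1 - Real.exp (-(ε^2/3))))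
          * (N:ℝ)^(1 - (ε^2/3) * α / (2*Real.log 2)) := by
  set c : ℝ := ε^2/3 with hc_def
  have hc : 0 < c := by positivity
  set x : ℝ := Real.exp (-c) with hx_def
  have hx0 : 0 < x := Real.exp_pos _
  have hx1 : x < 1 := by
    rw [hx_def, show (1:ℝ) = Real.exp 0 by rw [Real.exp_zero]]
    exact Real.exp_lt_exp.mpr (by linarith)
  have hlog2 : 0 < Real.log 2 := Real.log_pos one_lt_two
  set d2 : ℝ := c * α / (2 * Real.log 2) with hd2_def
  have hd2 : 0 < d2 := by positivity
  set K1 := ⌊Real.logb 2 (N:ℝ)⌋₊ with hK1_def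
  set Kst := ⌊(α/2) * Real.logb 2 (N:ℝ)⌋₊ with hKst_def
  have hN1 : (1:ℝ) ≤ (N:ℝ) := by exact_mod_cast hN
  have hNpos : (0:ℝ) < N := by linarith
  have hlogN0 : 0 ≤ Real.logb 2 N := Real.logb_nonneg one_lt_two hN1
  set T1 := (Finset.Icc 1 N).filter (fun m : ℕ => (m:ℝ) ≤ (N:ℝ)^((1:ℝ)/2)) with hT1_def
  set T2 := (Finset.Icc Kst K1).biUnion
    (fun k => (Finset.Icc 1 N).filter (fun m : ℕ =>
      ¬(-(ε*k) < (Spar k m:ℝ) - k/2 ∧ (Spar k m:ℝ) - k/2 < ε*k))) with hT2_def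
  have hsub : (Finset.Icc 1 N).filter (fun m => m ∉ GoodSet ε α) ⊆ T1 ∪ T2 := by
    intro m hm
    rw [Finset.mem_filter] at hm
    obtain ⟨hmIcc, hmG⟩ := hm
    have hm1 : 1 ≤ m := (Finset.mem_Icc.mp hmIcc).1
    have hmN : m ≤ N := (Finset.mem_Icc.mp hmIcc).2
    have hm1R : (1:ℝ) ≤ (m:ℝ) := by exact_mod_cast hm1
    have hlogm0 : 0 ≤ Real.logb 2 m := Real.logb_nonneg one_lt_two hm1R
    rw [GoodSet, Set.mem_setOf_eq] at hmG
    push_neg at hmG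
    obtain ⟨k, hk1, hk2, hk3⟩ := hmG
    by_cases hcase : ⌊α * Real.logb 2 m⌋₊ < Kst
    · refine Finset.mem_union_left _ (Finset.mem_filter.mpr ⟨hmIcc, ?_⟩)
      have h1 : α * Real.logb 2 m < Kst := (Nat.floor_lt (by positivity)).mp hcase
      have h2 : (Kst:ℝ) ≤ (α/2) * Real.logb 2 N := Nat.floor_le (by positivity)
      have h3 : Real.logb 2 m ≤ Real.logb 2 N * (1/2) := by
        have h4 : α * Real.logb 2 m < α * (Real.logb 2 N * (1/2)) := by nlinarith
        have h5 := (mul_lt_mul_iff_right₀ hα0).mp h4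
        linarith
      calc (m:ℝ) = (2:ℝ)^(Real.logb 2 m) :=
            (Real.rpow_logb two_pos (by norm_num) (by linarith)).symm
        _ ≤ (2:ℝ)^(Real.logb 2 N * (1/2)) := Real.rpow_le_rpow_of_exponent_le one_le_two h3
        _ = ((2:ℝ)^(Real.logb 2 N))^((1:ℝ)/2) := Real.rpow_mul (by norm_num) _ _
        _ = (N:ℝ)^((1:ℝ)/2) := by rw [Real.rpow_logb two_pos (by norm_num) hNpos]
    · refine Finset.mem_union_right _ (Finset.mem_biUnion.mpr
        ⟨k, ?_, Finset.mem_filter.mpr ⟨hmIcc, ?_⟩⟩)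
      · rw [Finset.mem_Icc]
        refine ⟨le_trans (not_lt.mp hcase) hk1, le_trans hk2 (Nat.floor_mono ?_)⟩
        exact Real.logb_le_logb_of_le one_lt_two (by linarith) (by exact_mod_cast hmN)
      · intro hcon
        obtain ⟨hA, hB⟩ := hcon
        rw [Spar_cast] at hA hB
        exact absurd (hk3 hA) (not_le.mpr hB)
  have hcard : (((Finset.Icc 1 N).filter (fun m => m ∉ GoodSet ε α)).card : ℝ)
      ≤ (T1.card : ℝ) + (T2.card : ℝ) := by
    have h1 := Finset.card_le_card hsub
    have h2 := Finset.card_union_le T1 T2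
    exact_mod_cast le_trans h1 h2
  have hT1card : (T1.card : ℝ) ≤ (N:ℝ)^((1:ℝ)/2) := by
    have hsub1 : T1 ⊆ Finset.Icc 1 ⌊(N:ℝ)^((1:ℝ)/2)⌋₊ := by
      intro m hm
      rw [hT1_def, Finset.mem_filter, Finset.mem_Icc] at hm
      exact Finset.mem_Icc.mpr ⟨hm.1.1, Nat.le_floor hm.2⟩
    have h1 := Finset.card_le_card hsub1
    rw [Nat.card_Icc] at h1
    have h2 := Nat.floor_le (show (0:ℝ) ≤ (N:ℝ)^((1:ℝ)/2) by positivity)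
    calc (T1.card : ℝ) ≤ ((⌊(N:ℝ)^((1:ℝ)/2)⌋₊ + 1 - 1 : ℕ) : ℝ) := by exact_mod_cast h1
      _ ≤ (N:ℝ)^((1:ℝ)/2) := by simpa using h2
  have hFk : ∀ k ∈ Finset.Icc Kst K1,
      (((Finset.Icc 1 N).filter (fun m : ℕ =>
        ¬(-(ε*k) < (Spar k m:ℝ) - k/2 ∧ (Spar k m:ℝ) - k/2 < ε*k))).card : ℝ)
        ≤ 4 * N * x^k := by
    intro k hk
    rw [Finset.mem_Icc] at hk
    have h2k : (0:ℕ) < 2^k := Nat.pow_pos (by norm_num)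
    have heq : (Finset.Icc 1 N).filter (fun m : ℕ =>
        ¬(-(ε*k) < (Spar k m:ℝ) - k/2 ∧ (Spar k m:ℝ) - k/2 < ε*k))
        = (Finset.Icc 1 N).filter (fun m : ℕ =>
        ¬(-(ε*k) < (Spar k (m % 2^k):ℝ) - k/2 ∧ (Spar k (m % 2^k):ℝ) - k/2 < ε*k)) := by
      apply Finset.filter_congr
      intro m _
      rw [Spar_mod]
    rw [heq]
    have hres := card_residue_le N (2^k) h2k (fun r =>
      ¬(-(ε*k) < (Spar k r:ℝ) - k/2 ∧ (Spar k r:ℝ) - k/2 < ε*k))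
    have hbad := card_bad_le hε hε2 k
    have hdiv : ((N / 2^k : ℕ):ℝ) * ((2:ℝ))^k ≤ (N:ℝ) := by
      have h5 : (N / 2^k) * 2^k ≤ N := Nat.div_mul_le_self N (2^k)
      exact_mod_cast h5
    have hpow : ((2:ℝ))^k ≤ (N:ℝ) := two_pow_le_of_le_floor hN hk.2
    have hxk : (0:ℝ) ≤ x^k := pow_nonneg hx0.le _
    calc (((Finset.Icc 1 N).filter (fun m : ℕ =>
        ¬(-(ε*k) < (Spar k (m % 2^k):ℝ) - k/2 ∧ (Spar k (m % 2^k):ℝ) - k/2 < ε*k))).card : ℝ)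
        ≤ ((N / 2^k + 1 : ℕ):ℝ) * (((range (2^k)).filter (fun r =>
            ¬(-(ε*k) < (Spar k r:ℝ) - k/2 ∧ (Spar k r:ℝ) - k/2 < ε*k))).card : ℝ) := by
          exact_mod_cast hres
      _ ≤ ((N / 2^k + 1 : ℕ):ℝ) * (2 * (2*x)^k) := by
          apply mul_le_mul_of_nonneg_left hbad (by positivity)
      _ ≤ 4 * N * x^k := by
          rw [mul_pow]
          push_cast
          nlinarith [Nat.cast_nonneg (α := ℝ) (N / 2^k)]
  have hT2card : (T2.card : ℝ) ≤ 4 * N * (x^Kst / (1-x)) := by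
    have h1 : T2.card ≤ ∑ k ∈ Finset.Icc Kst K1,
        ((Finset.Icc 1 N).filter (fun m : ℕ =>
          ¬(-(ε*k) < (Spar k m:ℝ) - k/2 ∧ (Spar k m:ℝ) - k/2 < ε*k))).card :=
      Finset.card_biUnion_le
    calc (T2.card : ℝ)
        ≤ ∑ k ∈ Finset.Icc Kst K1,
            (((Finset.Icc 1 N).filter (fun m : ℕ =>
              ¬(-(ε*k) < (Spar k m:ℝ) - k/2 ∧ (Spar k m:ℝ) - k/2 < ε*k))).card : ℝ) := by
          exact_mod_cast h1
      _ ≤ ∑ k ∈ Finset.Icc Kst K1, 4 * (N:ℝ) * x^k := Finset.sum_le_sum hFk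
      _ = 4 * N * ∑ k ∈ Finset.Icc Kst K1, x^k := by rw [Finset.mul_sum]
      _ ≤ 4 * N * (x^Kst/(1-x)) :=
          mul_le_mul_of_nonneg_left (sum_Icc_pow_le hx0.le hx1 _ _) (by positivity)
  have hxK : x^Kst ≤ Real.exp c * (N:ℝ)^(-d2) := by
    have h1 : (α/2) * Real.logb 2 N < Kst + 1 := Nat.lt_floor_add_one _
    have h2 : x^Kst = Real.exp ((Kst:ℕ) * (-c)) := by
      rw [hx_def, Real.exp_nat_mul]
    have h3 : ((Kst:ℕ):ℝ) * (-c) ≤ c - c*((α/2) * Real.logb 2 N) := by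
      have h4 := (mul_lt_mul_iff_right₀ hc).mpr h1
      nlinarith
    have h5 : Real.exp (c - c*((α/2)*Real.logb 2 N)) = Real.exp c * (N:ℝ)^(-d2) := by
      rw [Real.exp_sub]
      rw [div_eq_mul_inv]
      congr 1
      rw [Real.rpow_def_of_pos hNpos, ← Real.exp_neg]
      congr 1
      rw [Real.logb, hd2_def]
      field_simp
    calc x^Kst = Real.exp ((Kst:ℕ) * (-c)) := h2
      _ ≤ Real.exp (c - c*((α/2)*Real.logb 2 N)) := Real.exp_le_exp.mpr h3
      _ = Real.exp c * (N:ℝ)^(-d2) := h5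
  have hNN : (N:ℝ) * (N:ℝ)^(-d2) = (N:ℝ)^(1-d2) := by
    nth_rewrite 1 [show (N:ℝ) = (N:ℝ)^(1:ℝ) from (Real.rpow_one _).symm]
    rw [← Real.rpow_add hNpos]
    ring_nf
  have h7 : (0:ℝ) < 1 - x := by linarith
  calc (((Finset.Icc 1 N).filter (fun m => m ∉ GoodSet ε α)).card : ℝ)
      ≤ (T1.card : ℝ) + (T2.card : ℝ) := hcard
    _ ≤ (N:ℝ)^((1:ℝ)/2) + 4 * N * (x^Kst/(1-x)) := add_le_add hT1card hT2card
    _ ≤ (N:ℝ)^((1:ℝ)/2) + (4 * Real.exp c / (1-x)) * (N:ℝ)^(1-d2) := by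
        have h8 := mul_le_mul_of_nonneg_left hxK
          (show (0:ℝ) ≤ 4*(N:ℝ)/(1-x) by positivity)
        have h9 : 4 * (N:ℝ) * (x^Kst/(1-x)) = 4*(N:ℝ)/(1-x) * x^Kst := by ring
        have h10 : 4*(N:ℝ)/(1-x) * (Real.exp c * (N:ℝ)^(-d2))
            = (4 * Real.exp c / (1-x)) * ((N:ℝ) * (N:ℝ)^(-d2)) := by ring
        rw [hNN] at h10
        linarith [h9 ▸ (h10 ▸ h8)]
    _ = (N:ℝ)^((1:ℝ)/2) + (4 * Real.exp (ε^2/3) / (1 - Real.exp (-(ε^2/3))))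
          * (N:ℝ)^(1 - (ε^2/3) * α / (2*Real.log 2)) := by rw [hx_def, hc_def, hd2_def]


lemma countIn_mono {A B : Set ℕ} (h : A ⊆ B) (n : ℕ) : countIn A n ≤ countIn B n := by
  unfold countIn
  apply Finset.card_le_card
  intro m hm
  rw [Finset.mem_filter] at hm ⊢
  exact ⟨hm.1, h hm.2⟩

lemma starDense_mono {A B : Set ℕ} (h : A ⊆ B) : starDense A → starDense B := by
  rintro ⟨D, hD0, hD1, C, hC0, hCD⟩
  refine ⟨D, hD0, hD1, C, hC0, fun N hN => le_trans (hCD N hN) ?_⟩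
  have hNpos : (0:ℝ) < N := by exact_mod_cast hN
  have := countIn_mono h N
  exact (div_le_div_iff_of_pos_right hNpos).mpr (by exact_mod_cast this)

lemma main_half {ε α : ℝ} (hε : 0 < ε) (hε2 : ε ≤ 1/2) (hα0 : 0 < α) (hα1 : α ≤ 1) :
    starDense (GoodSet ε α) := by
  classical
  set c : ℝ := ε^2/3 with hc_def
  have hc : 0 < c := by positivity
  set x : ℝ := Real.exp (-c) with hx_def
  have hx0 : 0 < x := Real.exp_pos _
  have hx1 : x < 1 := by
    rw [hx_def, show (1:ℝ) = Real.exp 0 by rw [Real.exp_zero]]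
    exact Real.exp_lt_exp.mpr (by linarith)
  have hlog2 : 0 < Real.log 2 := Real.log_pos one_lt_two
  set d2 : ℝ := c * α / (2 * Real.log 2) with hd2_def
  have hd2 : 0 < d2 := by positivity
  set D : ℝ := min (1/2) d2 with hD_def
  have hD0 : 0 < D := lt_min (by norm_num) hd2
  have hD12 : D ≤ 1/2 := min_le_left _ _
  have hD1 : D ≤ 1 := by linarith
  have h1x : (0:ℝ) < 1 - x := by linarith
  set C : ℝ := 1 + 4 * Real.exp c / (1 - x) with hC_def
  have hC0 : 0 < C := by positivity
  refine ⟨D, hD0, hD1, C, hC0, ?_⟩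
  intro N hN
  have hN1 : (1:ℝ) ≤ N := by exact_mod_cast hN
  have hNpos : (0:ℝ) < N := by linarith
  have hb := bad_card_bound hε hε2 hα0 hα1 N hN
  rw [← hc_def, ← hx_def, ← hd2_def] at hb
  have hsplit : countIn (GoodSet ε α) N
      + ((Finset.Icc 1 N).filter (fun m => m ∉ GoodSet ε α)).card = N := by
    rw [countIn, Finset.card_filter_add_card_filter_not, Nat.card_Icc]
    omega
  set B := ((Finset.Icc 1 N).filter (fun m => m ∉ GoodSet ε α)).card with hB_def
  have hcount : (countIn (GoodSet ε α) N : ℝ) = N - B := by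
    have h2 : (countIn (GoodSet ε α) N : ℝ) + B = N := by exact_mod_cast hsplit
    linarith
  have hbB : (B:ℝ) ≤ C * (N:ℝ)^(1-D) := by
    have e1 : (N:ℝ)^((1:ℝ)/2) ≤ (N:ℝ)^(1-D) :=
      Real.rpow_le_rpow_of_exponent_le hN1 (by linarith)
    have e2 : (N:ℝ)^(1-d2) ≤ (N:ℝ)^(1-D) :=
      Real.rpow_le_rpow_of_exponent_le hN1
        (by have := min_le_right (1/2:ℝ) d2; linarith)
    have e3 : (0:ℝ) ≤ 4 * Real.exp c / (1-x) := by positivity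
    calc (B:ℝ) ≤ (N:ℝ)^((1:ℝ)/2) + (4 * Real.exp c / (1-x)) * (N:ℝ)^(1-d2) := hb
      _ ≤ (N:ℝ)^(1-D) + (4 * Real.exp c / (1-x)) * (N:ℝ)^(1-D) := by nlinarith
      _ = C * (N:ℝ)^(1-D) := by rw [hC_def]; ring
  have hND : (0:ℝ) < (N:ℝ)^D := Real.rpow_pos_of_pos hNpos _
  have hkey : (N:ℝ)^(1-D) * (N:ℝ)^D = N := by
    rw [← Real.rpow_add hNpos, show (1-D)+D = (1:ℝ) by ring, Real.rpow_one]
  have hfrac : (B:ℝ)/N ≤ C/(N:ℝ)^D := by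
    rw [div_le_div_iff₀ hNpos hND]
    calc (B:ℝ) * (N:ℝ)^D ≤ (C * (N:ℝ)^(1-D)) * (N:ℝ)^D :=
        mul_le_mul_of_nonneg_right hbB hND.le
      _ = C * N := by rw [mul_assoc, hkey]
  rw [hcount, sub_div, div_self (ne_of_gt hNpos)]
  linarith

theorem parity_sum_starDense (ε : ℝ) (hε : 0 < ε) (α : ℝ) (hα0 : 0 < α) (hα1 : α ≤ 1) :
    starDense {m : ℕ |
      ∀ k : ℕ, ⌊α * Real.logb 2 m⌋₊ ≤ k → k ≤ ⌊Real.logb 2 m⌋₊ →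
        -(ε * k) < (∑ i ∈ Finset.range k, (parity m i : ℝ)) - k / 2 ∧
        (∑ i ∈ Finset.range k, (parity m i : ℝ)) - k / 2 < ε * k} := by
  have hε' : 0 < min ε (1/2) := lt_min hε (by norm_num)
  have h := main_half hε' (min_le_right ε (1/2)) hα0 hα1
  refine starDense_mono ?_ h
  intro m hm k hk1 hk2
  obtain ⟨hA, hB⟩ := hm k hk1 hk2
  have hmk : min ε (1/2) * k ≤ ε * k :=
    mul_le_mul_of_nonneg_right (min_le_left _ _) (Nat.cast_nonneg _)
  exact ⟨by linarith, by linarith⟩
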